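/- If T satisfies constraints 1 and 4, and R is a 'restriction' transition system whose every output is an input of T (after renaming) and which has no inputs shared with T, then even if R violates constraint 4 (outputs may mirror inputs instantaneously), the composition T' = T ∥ R (with T's corresponding inputs renamed to match R's outputs) satisfies constraint 4. -/

import Mathlib

open Classical

noncomputable section

abbrev BExpr (E : Type) := (E → Bool) → Bool

def DependsOnVars {E : Type} (l : BExpr E) (V : Set E) : Prop :=
  ∀ σ τ : E → Bool, (∀ a ∈ V, σ a = τ a) → l σ = l τ

def IsFullConj {E : Type} (l : BExpr E) (V : Set E) : Prop :=
  ∃ p : E → Bool, ∀ σ : E → Bool, (l σ = true ↔ ∀ a ∈ V, σ a = p a)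

def Matches' {E : Type} (I : Set E) (l : BExpr E) (A : Set E) : Prop :=
  ∃ σ : E → Bool, (∀ a ∈ I, (σ a = true ↔ a ∈ A)) ∧ l σ = true

def Sat {E : Type} (l : BExpr E) : Prop := ∃ σ, l σ = true

structure TS (E : Type) where
  S : Type
  i : S
  Ev : Set E
  I : Set E
  Tran : Set (S × BExpr E × S)

namespace TS

variable {E : Type}

/-- Constraint 1: determinism/totality of matching. -/
def C1 (T : TS E) : Prop :=
  ∀ s : T.S, ∀ A : Set E, A ⊆ T.I →
    ∃! t : BExpr E × T.S, ((s, t.1, t.2) ∈ T.Tran ∧ Matches' T.I t.1 A)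

/-- Constraint 2: every label has the form x·y, x ∈ Bool(I), y ∈ Conj(E∖I). -/
def C2 (T : TS E) : Prop :=
  ∀ ⦃s : T.S⦄ ⦃l : BExpr E⦄ ⦃s' : T.S⦄, (s, l, s') ∈ T.Tran →
    ∃ x y : BExpr E, DependsOnVars x T.I ∧ IsFullConj y (T.Ev \ T.I) ∧
      ∀ σ, l σ = (x σ && y σ)

inductive Reach (T : TS E) : T.S → Prop
  | init : Reach T T.i
  | step {s : T.S} {l : BExpr E} {s' : T.S} :
      Reach T s → (s, l, s') ∈ T.Tran → Sat l → Reach T s'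

/-- Constraint 3: all states reachable. -/
def C3 (T : TS E) : Prop := ∀ s : T.S, Reach T s

/-- Constraint 4: a single output subexpression per state. -/
def C4 (T : TS E) : Prop :=
  ∀ s : T.S, ∃ y : BExpr E, IsFullConj y (T.Ev \ T.I) ∧
    ∀ ⦃l : BExpr E⦄ ⦃s' : T.S⦄, (s, l, s') ∈ T.Tran →
      ∃ x : BExpr E, DependsOnVars x T.I ∧ ∀ σ, l σ = (x σ && y σ)

def WF (T : TS E) : Prop := T.I ⊆ T.Ev

/-- θ / hiding of shared variables: existentially quantify them away. -/
def hide (H : Set E) (l : BExpr E) : BExpr E :=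
  fun σ => decide (∃ τ : E → Bool, (∀ a ∉ H, τ a = σ a) ∧ l τ = true)

/-- Product T' = P × Q. -/
def prod (P Q : TS E) : TS E where
  S := P.S × Q.S
  i := (P.i, Q.i)
  Ev := P.Ev ∪ Q.Ev
  I := P.I ∪ Q.I
  Tran := { t | ∃ lP lQ : BExpr E,
      (t.1.1, lP, t.2.2.1) ∈ P.Tran ∧ (t.1.2, lQ, t.2.2.2) ∈ Q.Tran ∧
      t.2.1 = fun σ => lP σ && lQ σ }

/-- Composition T = P ∥ Q: satisfiable product transitions with shared events hidden. -/
def comp (P Q : TS E) : TS E where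
  S := P.S × Q.S
  i := (P.i, Q.i)
  Ev := (P.Ev ∪ Q.Ev) \ (P.Ev ∩ Q.Ev)
  I := (P.I ∪ Q.I) \ (P.Ev ∩ Q.Ev)
  Tran := { t | ∃ lP lQ : BExpr E,
      (t.1.1, lP, t.2.2.1) ∈ P.Tran ∧ (t.1.2, lQ, t.2.2.2) ∈ Q.Tran ∧
      Sat (fun σ => lP σ && lQ σ) ∧
      t.2.1 = hide (P.Ev ∩ Q.Ev) (fun σ => lP σ && lQ σ) }

/-- Condition D: every shared event is an input of exactly one of the systems. -/
def SharedOK (P Q : TS E) : Prop :=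
  ∀ a ∈ P.Ev ∩ Q.Ev, (a ∈ P.I ∧ a ∉ Q.I) ∨ (a ∈ Q.I ∧ a ∉ P.I)

def Composable (P Q : TS E) : Prop :=
  P.WF ∧ Q.WF ∧ P.C1 ∧ P.C2 ∧ P.C3 ∧ Q.C1 ∧ Q.C2 ∧ Q.C3 ∧ SharedOK P Q ∧
  (P.C4 ∨ Q.C4) ∧
  (¬ P.C4 → P.Ev ∩ Q.Ev = P.Ev \ P.I) ∧
  (¬ Q.C4 → P.Ev ∩ Q.Ev = Q.Ev \ Q.I)

/-- A run of the system under input sequence A. -/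
def Run (T : TS E) (A : ℕ → Set E) (r : ℕ → T.S) : Prop :=
  r 0 = T.i ∧ ∀ n : ℕ, ∃ l : BExpr E,
    (r n, l, r (n + 1)) ∈ T.Tran ∧ Matches' T.I l (A n)

/-- Output event e occurs at time t of the run. -/
def EmitsAt (T : TS E) (A : ℕ → Set E) (r : ℕ → T.S) (e : E) (t : ℕ) : Prop :=
  ∃ l : BExpr E, (r t, l, r (t + 1)) ∈ T.Tran ∧ Matches' T.I l (A t) ∧
    ∀ σ : E → Bool, l σ = true → σ e = true

end TS

lemma dependsOn_mono {E : Type} {l : BExpr E} {V W : Set E}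
    (h : DependsOnVars l V) (hVW : V ⊆ W) : DependsOnVars l W :=
  fun σ τ hστ => h σ τ fun a ha => hστ a (hVW ha)

lemma fullConj_dependsOn {E : Type} {l : BExpr E} {V : Set E}
    (h : IsFullConj l V) : DependsOnVars l V := by
  obtain ⟨p, hp⟩ := h
  intro σ τ hστ
  rw [Bool.eq_iff_iff, hp, hp]
  constructor <;> intro h a ha
  · rw [← hστ a ha]; exact h a ha
  · rw [hστ a ha]; exact h a ha

lemma hide_dependsOn {E : Type} {l : BExpr E} {V H : Set E} (h : DependsOnVars l V) :
    DependsOnVars (TS.hide H l) (V \ H) := by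
  have key : ∀ σ τ : E → Bool, (∀ a ∈ V \ H, σ a = τ a) →
      TS.hide H l σ = true → TS.hide H l τ = true := by
    intro σ τ hστ hσ
    rw [TS.hide, decide_eq_true_eq] at hσ ⊢
    obtain ⟨ρ, hρ, hlρ⟩ := hσ
    refine ⟨fun a => if a ∈ H then ρ a else τ a, fun a ha => if_neg ha, ?_⟩
    rw [← hlρ]
    apply h
    intro a ha
    by_cases haH : a ∈ H
    · simp [haH]
    · simp only [haH, if_false]
      rw [← hστ a ⟨ha, haH⟩, hρ a haH]
  intro σ τ hστ
  rw [Bool.eq_iff_iff]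
  exact ⟨key σ τ hστ, key τ σ fun a ha => (hστ a ha).symm⟩

/-- composing T (satisfying constraints 1, 2 and 4) with a restriction
system R (possibly violating constraint 4) whose outputs are exactly the shared
events (all feeding T) and which takes no inputs from T, yields a composition
satisfying constraint 4. -/
theorem stmt17 {E : Type} (T R : TS E)
    (hTW : T.WF) (hRW : R.WF)
    (hT1 : T.C1) (hT2 : T.C2) (hT4 : T.C4)
    (hR1 : R.C1) (hR2 : R.C2)
    (hshared : TS.SharedOK T R)
    (hRout : T.Ev ∩ R.Ev = R.Ev \ R.I) :
    (TS.comp T R).C4 := by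
  rintro ⟨s, t⟩
  obtain ⟨y, hyfc, hy⟩ := hT4 s
  have hHI : T.Ev ∩ R.Ev ⊆ T.I := by
    intro a ha
    rcases hshared a ha with h | h
    · exact h.1
    · exfalso
      have : a ∈ R.Ev \ R.I := hRout ▸ ha
      exact this.2 h.1
  have hRI : ∀ a, a ∈ T.Ev → a ∈ R.I → a ∈ T.I :=
    fun a haT haR => hHI ⟨haT, hRW haR⟩
  have hEvI : (TS.comp T R).Ev \ (TS.comp T R).I = T.Ev \ T.I := by
    ext a
    simp only [TS.comp, Set.mem_diff, Set.mem_union, Set.mem_inter_iff, not_and, not_or]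
    constructor
    · rintro ⟨⟨hU, hH⟩, hI⟩
      have hnI : ¬(a ∈ T.I ∨ a ∈ R.I) := by
        intro hor
        exact (hI hor) hH
      push_neg at hnI
      have haT : a ∈ T.Ev := by
        rcases hU with h | h
        · exact h
        · exfalso
          have : a ∈ T.Ev ∩ R.Ev := hRout.symm ▸ (⟨h, hnI.2⟩ : a ∈ R.Ev \ R.I)
          exact hH this.1 this.2
      exact ⟨haT, hnI.1⟩
    · rintro ⟨haT, haI⟩
      have hnH : ¬(a ∈ T.Ev ∧ a ∈ R.Ev) := fun h => haI (hHI h)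
      have hnRI : a ∉ R.I := fun h => haI (hRI a haT h)
      refine ⟨⟨Or.inl haT, fun h1 h2 => hnH ⟨h1, h2⟩⟩, ?_⟩
      intro hor
      exact absurd hor (by push_neg; exact ⟨haI, hnRI⟩)
  refine ⟨y, hEvI ▸ hyfc, ?_⟩
  rintro l ⟨s', t'⟩ ⟨lT, lR, hTtr, hRtr, hsat, hl⟩
  obtain ⟨xT, hxTdep, hlT⟩ := hy hTtr
  obtain ⟨xR, yR, hxRdep, hyRfc, hlR⟩ := hR2 hRtr
  have hlRdep : DependsOnVars lR (R.I ∪ (R.Ev \ R.I)) := by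
    intro σ τ hστ
    rw [hlR, hlR,
      hxRdep σ τ (fun a ha => hστ a (Or.inl ha)),
      fullConj_dependsOn hyRfc σ τ (fun a ha => hστ a (Or.inr ha))]
  refine ⟨TS.hide (T.Ev ∩ R.Ev) (fun σ => xT σ && lR σ), ?_, ?_⟩
  · have h1 : DependsOnVars (fun σ => xT σ && lR σ) (T.I ∪ (R.I ∪ (R.Ev \ R.I))) := by
      intro σ τ hστ
      simp only
      rw [hxTdep σ τ (fun a ha => hστ a (Or.inl ha)),
        hlRdep σ τ (fun a ha => hστ a (Or.inr ha))]
    apply dependsOn_mono (hide_dependsOn (H := T.Ev ∩ R.Ev) h1)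
    intro a ha
    have haH : a ∉ T.Ev ∩ R.Ev := ha.2
    have haU : a ∈ T.I ∪ R.I := by
      rcases ha.1 with h | h | h
      · exact Or.inl h
      · exact Or.inr h
      · exact absurd (hRout.symm ▸ h) haH
    show a ∈ (T.I ∪ R.I) \ (T.Ev ∩ R.Ev)
    exact ⟨haU, haH⟩
  · intro σ
    have hl' : l = TS.hide (T.Ev ∩ R.Ev) fun σ => lT σ && lR σ := hl
    rw [hl', Bool.eq_iff_iff]
    simp only [TS.hide, Bool.and_eq_true, decide_eq_true_eq]
    have hyd : ∀ τ : E → Bool, (∀ a ∉ T.Ev ∩ R.Ev, τ a = σ a) → y τ = y σ := by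
      intro τ hτ
      exact fullConj_dependsOn hyfc τ σ (fun a ha => hτ a (fun haH => ha.2 (hHI haH)))
    constructor
    · rintro ⟨τ, hτ, hval1, hval2⟩
      rw [hlT, Bool.and_eq_true] at hval1
      refine ⟨⟨τ, hτ, hval1.1, hval2⟩, ?_⟩
      rw [← hyd τ hτ]
      exact hval1.2
    · rintro ⟨⟨τ, hτ, hx, hlRτ⟩, hyσ⟩
      refine ⟨τ, hτ, ?_, hlRτ⟩
      rw [hlT, Bool.and_eq_true, hyd τ hτ]
      exact ⟨hx, hyσ⟩
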